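/- Let a be a type-B u-symbol. Then a has an odd number of isolated points. Moreover, writing the isolated points as k_0, …, k_{2f}, numbered so that the corresponding entries of a' = i(a) satisfy a'_{k_0} < a'_{k_1} < ⋯ < a'_{k_{2f}}, if the symbol i(a) is special then k_t ≡ t (mod 2) for every t. -/
import Mathlib


open scoped Classical

/-- The map `i` from type-B u-symbols to type-B symbols: the `j`-th entry is
`a j - ⌊j/2⌋`. -/
def mapB (a : ℕ → ℕ) : ℕ → ℕ := fun j => a j - j / 2

/-- A type-B u-symbol of rank `n` (with `2m+1` entries, indexed `0,…,2m`). -/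
def IsUSymB (n m : ℕ) (a : ℕ → ℕ) : Prop :=
  (∀ i, i + 2 ≤ 2 * m → a i + 2 ≤ a (i + 2)) ∧
    (∑ j ∈ Finset.range (2 * m + 1), a j) = n + 2 * m ^ 2

/-- The u-symbol `a` is distinguished: its entries are nondecreasing. -/
def DistB (m : ℕ) (a : ℕ → ℕ) : Prop := ∀ i, i + 1 ≤ 2 * m → a i ≤ a (i + 1)

/-- The symbol `i(a)` is special, i.e. its entries are nondecreasing. -/
def SpecialB (m : ℕ) (a : ℕ → ℕ) : Prop :=
  ∀ i, i + 1 ≤ 2 * m → mapB a i ≤ mapB a (i + 1)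

/-- `k` is an isolated point of the u-symbol `a`: the `k`-th entry of `i(a)` differs
from every other entry of `i(a)`. -/
def IsIsolB (m : ℕ) (a : ℕ → ℕ) (k : ℕ) : Prop :=
  k ≤ 2 * m ∧ ∀ l ≤ 2 * m, l ≠ k → mapB a l ≠ mapB a k

/-- `[k,l]` is a ladder of `a`. -/
def IsLadderB (m : ℕ) (a : ℕ → ℕ) (k l : ℕ) : Prop :=
  k ≤ l ∧ l ≤ 2 * m ∧ (∀ j, k ≤ j → j ≤ l → a j = a k + (j - k)) ∧
    (0 < k → a (k - 1) + 1 < a k) ∧ (l < 2 * m → a l + 1 < a (l + 1))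

/-- `[k,l]` is a staircase of `a`. -/
def IsStairB (m : ℕ) (a : ℕ → ℕ) (k l : ℕ) : Prop :=
  k ≤ l ∧ l ≤ 2 * m ∧ (l - k) % 2 = 1 ∧
    (∀ j, k ≤ j → j ≤ l → a j = a k + 2 * ((j - k) / 2)) ∧
    (1 < k → a (k - 2) + 2 < a k) ∧ (l + 2 ≤ 2 * m → a l + 2 < a (l + 2))

/-- A part is a ladder or a staircase. -/
def IsPartB (m : ℕ) (a : ℕ → ℕ) (k l : ℕ) : Prop :=
  IsLadderB m a k l ∨ IsStairB m a k l

/-- `K 0, …, K (N-1)` enumerates the isolated points of `a`, ordered so that the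
corresponding entries of `i(a)` are strictly increasing. -/
def EnumB (m : ℕ) (a : ℕ → ℕ) (N : ℕ) (K : ℕ → ℕ) : Prop :=
  (∀ t, t < N → IsIsolB m a (K t)) ∧
  (∀ j, IsIsolB m a j → ∃ t, t < N ∧ K t = j) ∧
  (∀ s t, s < t → t < N → mapB a (K s) < mapB a (K t))

/-- A type-B u-symbol has an odd number of isolated points; and if `i(a)` is
special then, numbering the isolated points `K 0, …, K (N-1)` so that the
corresponding entries of `i(a)` increase, `K t ≡ t (mod 2)` for every `t`. -/
lemma even_card_of_pairing (s : Finset ℕ) (P : ℕ → ℕ)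
    (h1 : ∀ j ∈ s, P j ∈ s) (h2 : ∀ j ∈ s, P (P j) = j)
    (h3 : ∀ j ∈ s, P j % 2 ≠ j % 2) : Even s.card := by
  classical
  have key : (s.filter (fun j => j % 2 = 0)).card
      = (s.filter (fun j => ¬ j % 2 = 0)).card := by
    apply Finset.card_bij (fun j _ => P j)
    · intro j hj
      simp only [Finset.mem_filter] at hj ⊢
      exact ⟨h1 j hj.1, by have := h3 j hj.1; omega⟩
    · intro j hj j' hj' h
      simp only [Finset.mem_filter] at hj hj'
      rw [← h2 j hj.1, h, h2 j' hj'.1]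
    · intro b hb
      simp only [Finset.mem_filter] at hb
      refine ⟨P b, ?_, h2 b hb.1⟩
      simp only [Finset.mem_filter]
      exact ⟨h1 b hb.1, by have := h3 b hb.1; omega⟩
  have htot := Finset.card_filter_add_card_filter_not
    (s := s) (p := fun j => j % 2 = 0)
  exact ⟨(s.filter (fun j => j % 2 = 0)).card, by omega⟩

theorem stmt16 (n m : ℕ) (hn : 1 ≤ n) (hm : 1 ≤ m) (a : ℕ → ℕ)
    (ha : IsUSymB n m a) :
    Odd ((Finset.range (2 * m + 1)).filter (IsIsolB m a)).card ∧
    (SpecialB m a →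
      ∀ N K, EnumB m a N K → ∀ t, t < N → K t % 2 = t % 2) := by
  obtain ⟨hstep, -⟩ := ha
  set f : ℕ → ℕ := mapB a with hf
  -- lower bound on entries
  have hlow : ∀ i, i ≤ 2 * m → 2 * (i / 2) ≤ a i := by
    intro i
    induction i using Nat.strong_induction_on with
    | _ i ih =>
      intro hi
      rcases Nat.lt_or_ge i 2 with h2 | h2
      · interval_cases i <;> simp
      · have h1 := ih (i - 2) (by omega) (by omega)
        have h3 := hstep (i - 2) (by omega)
        have h4 : i - 2 + 2 = i := by omega
        rw [h4] at h3
        omega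
  -- strict monotonicity within a parity class, one step
  have hstrict : ∀ i, i + 2 ≤ 2 * m → f i + 1 ≤ f (i + 2) := by
    intro i hi
    have h1 := hstep i hi
    have h2 := hlow i (by omega)
    simp only [hf, mapB]
    omega
  have hchain : ∀ k i, i + 2 * k ≤ 2 * m → f i + k ≤ f (i + 2 * k) := by
    intro k
    induction k with
    | zero => intro i _; simp
    | succ k ih =>
      intro i h
      have h1 := ih (i + 2) (by omega)
      have h2 := hstrict i (by omega)
      have h3 : i + 2 + 2 * k = i + 2 * (k + 1) := by ring
      rw [h3] at h1
      omega
  have hpar : ∀ i j, j ≤ 2 * m → i < j → i % 2 = j % 2 → f i < f j := by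
    intro i j hj hij hpar
    obtain ⟨k, hk⟩ : ∃ k, j = i + 2 * (k + 1) := ⟨(j - i) / 2 - 1, by omega⟩
    subst hk
    have := hchain (k + 1) i (by omega)
    omega
  -- distinct indices with equal value have opposite parity
  have hopp : ∀ x y, x ≤ 2 * m → y ≤ 2 * m → x ≠ y → f x = f y → x % 2 ≠ y % 2 := by
    intro x y hx hy hxy hfe hp
    rcases Nat.lt_or_ge x y with h | h
    · exact absurd hfe (Nat.ne_of_lt (hpar x y hy h hp))
    · have : y < x := by omega
      exact absurd hfe.symm (Nat.ne_of_lt (hpar y x hx this hp.symm))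
  -- uniqueness of partners
  have huniq : ∀ j l1 l2, j ≤ 2 * m → l1 ≤ 2 * m → l2 ≤ 2 * m → l1 ≠ j → l2 ≠ j →
      f l1 = f j → f l2 = f j → l1 = l2 := by
    intro j l1 l2 hj hl1 hl2 h1 h2 he1 he2
    by_contra hne
    have p1 := hopp l1 j hl1 hj h1 he1
    have p2 := hopp l2 j hl2 hj h2 he2
    have p3 := hopp l1 l2 hl1 hl2 hne (he1.trans he2.symm)
    omega
  -- the partner function
  set P : ℕ → ℕ := fun j =>
    if h : ∃ l, l ≤ 2 * m ∧ l ≠ j ∧ f l = f j then h.choose else 0 with hP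
  have hPspec : ∀ j, j ≤ 2 * m → ¬ IsIsolB m a j →
      P j ≤ 2 * m ∧ P j ≠ j ∧ f (P j) = f j := by
    intro j hj hiso
    have hex : ∃ l, l ≤ 2 * m ∧ l ≠ j ∧ f l = f j := by
      simp only [IsIsolB, not_and, not_forall] at hiso
      obtain ⟨l, hl, hlj, hfe⟩ := hiso hj
      exact ⟨l, hl, hlj, not_not.mp hfe⟩
    simp only [hP, dif_pos hex]
    exact hex.choose_spec
  have hPiso : ∀ j, j ≤ 2 * m → ¬ IsIsolB m a j → ¬ IsIsolB m a (P j) := by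
    intro j hj hiso hiso'
    obtain ⟨h1, h2, h3⟩ := hPspec j hj hiso
    exact hiso'.2 j hj (fun h => h2 h.symm) h3.symm
  have hPP : ∀ j, j ≤ 2 * m → ¬ IsIsolB m a j → P (P j) = j := by
    intro j hj hiso
    obtain ⟨h1, h2, h3⟩ := hPspec j hj hiso
    obtain ⟨h4, h5, h6⟩ := hPspec (P j) h1 (hPiso j hj hiso)
    exact huniq (P j) (P (P j)) j h1 h4 hj h5 (fun h => h2 h.symm) h6 h3.symm
  have hPopp : ∀ j, j ≤ 2 * m → ¬ IsIsolB m a j → P j % 2 ≠ j % 2 := by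
    intro j hj hiso
    obtain ⟨h1, h2, h3⟩ := hPspec j hj hiso
    exact hopp (P j) j h1 hj h2 h3
  constructor
  · -- odd number of isolated points
    have heven : Even (((Finset.range (2 * m + 1)).filter
        (fun j => ¬ IsIsolB m a j)).card) := by
      apply even_card_of_pairing _ P
      · intro j hj
        simp only [Finset.mem_filter, Finset.mem_range] at hj ⊢
        have hj' : j ≤ 2 * m := by omega
        obtain ⟨h1, -, -⟩ := hPspec j hj' hj.2
        exact ⟨by omega, hPiso j hj' hj.2⟩
      · intro j hj
        simp only [Finset.mem_filter, Finset.mem_range] at hj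
        exact hPP j (by omega) hj.2
      · intro j hj
        simp only [Finset.mem_filter, Finset.mem_range] at hj
        exact hPopp j (by omega) hj.2
    have htot := Finset.card_filter_add_card_filter_not
      (s := Finset.range (2 * m + 1)) (p := IsIsolB m a)
    rw [Finset.card_range] at htot
    rw [Nat.odd_iff]
    rw [Nat.even_iff] at heven
    omega
  · -- special case
    intro hsp N K hK t ht
    -- full monotonicity of f
    have hmono : ∀ d i, i + d ≤ 2 * m → f i ≤ f (i + d) := by
      intro d
      induction d with
      | zero => intro i _; simp
      | succ d ih =>
        intro i h
        have h1 := ih i (by omega)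
        have h2 := hsp (i + d) (by omega)
        simp only [← hf] at h2
        calc f i ≤ f (i + d) := h1
          _ ≤ f (i + d + 1) := h2
          _ = f (i + (d + 1)) := by ring_nf
    have hmono' : ∀ i j, i ≤ j → j ≤ 2 * m → f i ≤ f j := by
      intro i j hij hj
      have := hmono (j - i) i (by omega)
      have h : i + (j - i) = j := by omega
      rwa [h] at this
    -- partners are adjacent
    have hadj : ∀ j, j ≤ 2 * m → ¬ IsIsolB m a j → P j = j + 1 ∨ P j + 1 = j := by
      intro j hj hiso
      obtain ⟨h1, h2, h3⟩ := hPspec j hj hiso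
      rcases Nat.lt_or_ge (P j) j with h | h
      · right
        by_contra hne
        have hle : P j + 2 ≤ j := by omega
        have ha1 := hpar (P j) (P j + 2) (by omega) (by omega) (by omega)
        have ha2 := hmono' (P j + 2) j hle hj
        omega
      · left
        have hlt : j < P j := by omega
        by_contra hne
        have hle : j + 2 ≤ P j := by omega
        have ha1 := hpar j (j + 2) (by omega) (by omega) (by omega)
        have ha2 := hmono' (j + 2) (P j) hle h1
        omega
    set k := K t with hk
    have hkiso : IsIsolB m a k := hK.1 t ht
    have hkm : k ≤ 2 * m := hkiso.1
    -- non-isolated indices below k: even count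
    have heven : Even (((Finset.range k).filter (fun j => ¬ IsIsolB m a j)).card) := by
      apply even_card_of_pairing _ P
      · intro j hj
        simp only [Finset.mem_filter, Finset.mem_range] at hj ⊢
        have hj' : j ≤ 2 * m := by omega
        obtain ⟨h1, h2, h3⟩ := hPspec j hj' hj.2
        have hPk : P j ≠ k := by
          intro h
          exact hkiso.2 j hj' (by omega) (h ▸ h3).symm
        have := hadj j hj' hj.2
        exact ⟨by omega, hPiso j hj' hj.2⟩
      · intro j hj
        simp only [Finset.mem_filter, Finset.mem_range] at hj
        exact hPP j (by omega) hj.2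
      · intro j hj
        simp only [Finset.mem_filter, Finset.mem_range] at hj
        exact hPopp j (by omega) hj.2
    -- K is strictly increasing
    have hKmono : ∀ s t', s < t' → t' < N → K s < K t' := by
      intro s t' hst ht'
      have h1 := hK.2.2 s t' hst ht'
      simp only [← hf] at h1
      have hs := (hK.1 s (by omega)).1
      have ht'' := (hK.1 t' ht').1
      by_contra hle
      have := hmono' (K t') (K s) (by omega) hs
      omega
    -- isolated indices below k number exactly t
    have hcount : ((Finset.range k).filter (IsIsolB m a)).card = t := by
      rw [← Finset.card_range t]
      symm
      apply Finset.card_bij (fun s _ => K s)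
      · intro s hs
        simp only [Finset.mem_range] at hs
        simp only [Finset.mem_filter, Finset.mem_range]
        exact ⟨hKmono s t hs ht, hK.1 s (by omega)⟩
      · intro s hs s' hs' h
        simp only [Finset.mem_range] at hs hs'
        by_contra hne
        rcases Nat.lt_or_ge s s' with hlt | hge
        · exact absurd h (Nat.ne_of_lt (hKmono s s' hlt (by omega)))
        · exact absurd h.symm (Nat.ne_of_lt (hKmono s' s (by omega) (by omega)))
      · intro j hj
        simp only [Finset.mem_filter, Finset.mem_range] at hj
        obtain ⟨s, hsN, hKs⟩ := hK.2.1 j hj.2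
        refine ⟨s, ?_, hKs⟩
        simp only [Finset.mem_range]
        by_contra hge
        have : t ≤ s := by omega
        rcases Nat.eq_or_lt_of_le this with he | hlt
        · rw [← he] at hKs; omega
        · have := hKmono t s hlt hsN
          omega
    have htot := Finset.card_filter_add_card_filter_not
      (s := Finset.range k) (p := IsIsolB m a)
    rw [Finset.card_range, hcount] at htot
    rw [Nat.even_iff] at heven
    omega
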